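/- Let p be a prime and n ≥ 2, and let T = Tr(Z_{p^n}). Let A = [[p^r·α, 0],[0,0]] where 1 ≤ r ≤ n−1 and α is a unit of Z_{p^n}. Then the annihilator of p^r·α in Z_{p^n} is the ideal generated by p^{n−r}, and the neighbourhood of A in Γ(T) is {[[a,b],[0,c]] : a,c ∈ Z_{p^n}, b ∈ (p^{n−r}), B ≠ aI, B ≠ A}, which has cardinality p^{2n+r} − p^n − 1. -/

import Mathlib

open Matrix

/-- The ring of 2×2 upper triangular matrices over `R`. -/
def Tri (R : Type*) [CommRing R] : Subring (Matrix (Fin 2) (Fin 2) R) where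
  carrier := {A | A 1 0 = 0}
  mul_mem' := by
    intro a b ha hb
    simp only [Set.mem_setOf_eq] at *
    simp [Matrix.mul_apply, Fin.sum_univ_two, ha, hb]
  one_mem' := by simp [Matrix.one_apply]
  add_mem' := by
    intro a b ha hb
    simp_all [Matrix.add_apply]
  zero_mem' := by simp
  neg_mem' := by
    intro a ha
    simp_all

/-- The commuting graph of a ring `T`: vertices are the noncentral elements,
two distinct vertices are adjacent iff they commute. -/
def commGraph (T : Type*) [Ring T] : SimpleGraph {x : T // x ∉ Set.center T} where
  Adj a b := a ≠ b ∧ (a : T) * b = b * a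
  symm := by
    constructor
    rintro a b ⟨h1, h2⟩
    exact ⟨h1.symm, h2.symm⟩
  loopless := by constructor; rintro a ⟨h, _⟩; exact h rfl

/-! ### Auxiliary lemmas -/

lemma ann_iff (p n r : ℕ) (hp : p.Prime) (hr : r ≤ n) (s : ZMod (p^n)) :
    s * (p : ZMod (p^n)) ^ r = 0 ↔ ((p : ZMod (p^n)) ^ (n - r)) ∣ s := by
  haveI : NeZero (p^n) := ⟨pow_ne_zero _ hp.pos.ne'⟩
  constructor
  · intro h
    have hval : ((s.val * p ^ r : ℕ) : ZMod (p^n)) = 0 := by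
      push_cast
      rw [ZMod.natCast_zmod_val]
      exact h
    rw [ZMod.natCast_eq_zero_iff] at hval
    have hpn : p ^ n = p ^ (n - r) * p ^ r := by rw [← pow_add, Nat.sub_add_cancel hr]
    have hval2 : p ^ (n - r) * p ^ r ∣ s.val * p ^ r := by rw [← hpn]; exact hval
    have hd : p ^ (n - r) ∣ s.val :=
      (Nat.mul_dvd_mul_iff_right (pow_pos hp.pos r)).mp hval2
    obtain ⟨k, hk⟩ := hd
    refine ⟨(k : ZMod (p^n)), ?_⟩
    have := congrArg (Nat.cast : ℕ → ZMod (p^n)) hk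
    push_cast at this
    rw [ZMod.natCast_zmod_val] at this
    exact this
  · rintro ⟨t, rfl⟩
    rw [mul_assoc, mul_comm t, ← mul_assoc, ← pow_add, Nat.sub_add_cancel hr]
    have : ((p^n : ℕ) : ZMod (p^n)) = 0 := ZMod.natCast_self _
    push_cast at this
    rw [this, zero_mul]

lemma dvd_val_of_dvd (p n k : ℕ) (hp : p.Prime) (hk : k ≤ n) (s : ZMod (p^n))
    (h : ((p : ZMod (p^n)) ^ k) ∣ s) : p ^ k ∣ s.val := by
  haveI : NeZero (p^n) := ⟨pow_ne_zero _ hp.pos.ne'⟩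
  obtain ⟨t, rfl⟩ := h
  have h1 : (((p^k * t.val : ℕ)) : ZMod (p^n)) = (p : ZMod (p^n))^k * t := by
    push_cast; rw [ZMod.natCast_zmod_val]
  have h2 : ((p:ZMod (p^n))^k * t).val = (p^k * t.val) % (p^n) := by
    rw [← h1, ZMod.val_natCast]
  rw [h2]
  exact (Nat.dvd_mod_iff (pow_dvd_pow p hk)).mpr (dvd_mul_right _ _)

lemma card_span (p n r : ℕ) (hp : p.Prime) (hr : r ≤ n) :
    Nat.card (Ideal.span {(p : ZMod (p^n))^(n-r)} : Ideal (ZMod (p^n))) = p ^ r := by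
  haveI : NeZero (p^n) := ⟨pow_ne_zero _ hp.pos.ne'⟩
  haveI : NeZero (p^r) := ⟨pow_ne_zero _ hp.pos.ne'⟩
  have hpn : p ^ n = p ^ (n - r) * p ^ r := by rw [← pow_add, Nat.sub_add_cancel hr]
  let f : ZMod (p^r) → (Ideal.span {(p : ZMod (p^n))^(n-r)} : Ideal (ZMod (p^n))) :=
    fun x => ⟨(p : ZMod (p^n))^(n-r) * (x.val : ZMod (p^n)),
      Ideal.mem_span_singleton.mpr ⟨_, rfl⟩⟩
  have hbij : Function.Bijective f := by
    constructor
    · intro x y hxy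
      have h1 : ((p^(n-r) * x.val : ℕ) : ZMod (p^n)) = ((p^(n-r) * y.val : ℕ) : ZMod (p^n)) := by
        push_cast
        exact congrArg Subtype.val hxy
      rw [ZMod.natCast_eq_natCast_iff] at h1
      rw [hpn] at h1
      have h2 := Nat.ModEq.mul_left_cancel' (pow_ne_zero (n-r) hp.pos.ne') h1
      have h3 : x.val = y.val := by
        rw [Nat.ModEq, Nat.mod_eq_of_lt (ZMod.val_lt x), Nat.mod_eq_of_lt (ZMod.val_lt y)] at h2
        exact h2
      exact ZMod.val_injective _ h3
    · rintro ⟨s, hs⟩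
      have hd : p ^ (n-r) ∣ s.val :=
        dvd_val_of_dvd p n (n-r) hp (Nat.sub_le n r) s (Ideal.mem_span_singleton.mp hs)
      obtain ⟨k, hk⟩ := hd
      have hklt : k < p ^ r := by
        have h4 := ZMod.val_lt s
        rw [hk, hpn] at h4
        have h5 : 0 < p ^ (n - r) := pow_pos hp.pos _
        exact lt_of_mul_lt_mul_left h4 (Nat.zero_le _)
      refine ⟨(k : ZMod (p^r)), ?_⟩
      apply Subtype.ext
      show (p : ZMod (p^n))^(n-r) * (((k : ZMod (p^r)).val : ℕ) : ZMod (p^n)) = s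
      rw [ZMod.val_natCast, Nat.mod_eq_of_lt hklt]
      have : ((p^(n-r) * k : ℕ) : ZMod (p^n)) = ((s.val : ℕ) : ZMod (p^n)) := by rw [hk]
      push_cast at this
      rwa [ZMod.natCast_zmod_val] at this
  rw [← Nat.card_eq_of_bijective f hbij, Nat.card_zmod]

section TriLemmas

variable {R : Type*} [CommRing R]

lemma tri_entry (B : Tri R) : (B : Matrix (Fin 2) (Fin 2) R) 1 0 = 0 := B.property

lemma tri_eta (B : Tri R) : (B : Matrix (Fin 2) (Fin 2) R) =
    !![(B : Matrix (Fin 2) (Fin 2) R) 0 0, (B : Matrix (Fin 2) (Fin 2) R) 0 1; 0,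
      (B : Matrix (Fin 2) (Fin 2) R) 1 1] := by
  rw [← tri_entry B]
  exact Matrix.eta_fin_two _

lemma center_tri (B : Tri R) :
    B ∈ Set.center (Tri R) ↔ ∃ a : R, (B : Matrix (Fin 2) (Fin 2) R) = !![a, 0; 0, a] := by
  rw [Semigroup.mem_center_iff]
  constructor
  · intro h
    have hB := tri_eta B
    have hE01 : (!![0,1;0,0] : Matrix (Fin 2) (Fin 2) R) ∈ Tri R := by
      show (!![0,1;0,0] : Matrix (Fin 2) (Fin 2) R) 1 0 = 0; simp
    have hE00 : (!![1,0;0,0] : Matrix (Fin 2) (Fin 2) R) ∈ Tri R := by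
      show (!![1,0;0,0] : Matrix (Fin 2) (Fin 2) R) 1 0 = 0; simp
    have h1 := congrArg (Subtype.val) (h ⟨_, hE01⟩)
    have h2 := congrArg (Subtype.val) (h ⟨_, hE00⟩)
    simp only [Subring.coe_mul] at h1 h2
    rw [hB] at h1 h2
    have hac : (B : Matrix (Fin 2) (Fin 2) R) 1 1 = (B : Matrix (Fin 2) (Fin 2) R) 0 0 := by
      have := congrFun (congrFun h1 0) 1
      simpa using this
    have hbz : (B : Matrix (Fin 2) (Fin 2) R) 0 1 = 0 := by
      have := congrFun (congrFun h2 0) 1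
      simpa using this
    refine ⟨(B : Matrix (Fin 2) (Fin 2) R) 0 0, ?_⟩
    conv_lhs => rw [hB]
    rw [hbz, hac]
  · rintro ⟨a, hB⟩ g
    apply Subtype.ext
    simp only [Subring.coe_mul, hB]
    have : (!![a, 0; 0, a] : Matrix (Fin 2) (Fin 2) R) = a • 1 := by
      rw [smul_one_eq_diagonal]
      ext i j
      fin_cases i <;> fin_cases j <;> simp [Matrix.diagonal]
    rw [this]
    simp [Matrix.smul_mul, Matrix.mul_smul]

lemma card_center_tri : Nat.card (Set.center (Tri R)) = Nat.card R := by
  have hmem : ∀ a : R, (!![a,0;0,a] : Matrix (Fin 2) (Fin 2) R) ∈ Tri R := by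
    intro a; show (!![a,0;0,a] : Matrix (Fin 2) (Fin 2) R) 1 0 = 0; simp
  let g : R → (Set.center (Tri R)) := fun a =>
    ⟨⟨!![a,0;0,a], hmem a⟩, (center_tri _).mpr ⟨a, rfl⟩⟩
  have hbij : Function.Bijective g := by
    constructor
    · intro x y hxy
      have h := congrArg (fun z => (((z : ↥(Set.center (Tri R))) : Tri R) :
        Matrix (Fin 2) (Fin 2) R) 0 0) hxy
      simpa [g] using h
    · rintro ⟨B, hB⟩
      obtain ⟨a, ha⟩ := (center_tri B).mp hB
      exact ⟨a, Subtype.ext (Subtype.ext ha.symm)⟩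
  exact (Nat.card_eq_of_bijective g hbij).symm

end TriLemmas

/-- Corollary 2.8(i), key step: over `ℤ/p^n` (`p` prime, `n ≥ 2`), for
`A = [[p^r α, 0],[0,0]]` with `1 ≤ r ≤ n-1` and `α` a unit, the annihilator of
`p^r α` is the ideal `(p^{n-r})`, the neighbourhood of `A` in the commuting
graph of `Tri (ZMod (p^n))` consists of the matrices `[[a,b],[0,c]]` with
`b ∈ (p^{n-r})`, excluding central matrices and `A` itself, and it has
cardinality `p^{2n+r} - p^n - 1`. -/
theorem neighbourhood_tri_zmod_ppow (p n r : ℕ) (hp : p.Prime) (hn : 2 ≤ n)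
    (hr1 : 1 ≤ r) (hr2 : r ≤ n - 1) (α : (ZMod (p ^ n))ˣ)
    (A : Tri (ZMod (p ^ n)))
    (hA : (A : Matrix (Fin 2) (Fin 2) (ZMod (p ^ n))) =
      !![(p : ZMod (p ^ n)) ^ r * (α : ZMod (p ^ n)), 0; 0, 0]) :
    ({s : ZMod (p ^ n) | s * ((p : ZMod (p ^ n)) ^ r * (α : ZMod (p ^ n))) = 0} =
        (Ideal.span {(p : ZMod (p ^ n)) ^ (n - r)} : Ideal (ZMod (p ^ n)))) ∧
    ({B : Tri (ZMod (p ^ n)) | A * B = B * A ∧ B ≠ A ∧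
        B ∉ Set.center (Tri (ZMod (p ^ n)))} =
      {B : Tri (ZMod (p ^ n)) | (∃ a b c : ZMod (p ^ n),
          b ∈ Ideal.span {(p : ZMod (p ^ n)) ^ (n - r)} ∧
          (B : Matrix (Fin 2) (Fin 2) (ZMod (p ^ n))) = !![a, b; 0, c]) ∧
        B ∉ Set.center (Tri (ZMod (p ^ n))) ∧ B ≠ A}) ∧
    Nat.card {B : Tri (ZMod (p ^ n)) | A * B = B * A ∧ B ≠ A ∧
        B ∉ Set.center (Tri (ZMod (p ^ n)))} =
      p ^ (2 * n + r) - p ^ n - 1 := by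
  haveI : NeZero (p ^ n) := ⟨pow_ne_zero _ hp.pos.ne'⟩
  set R := ZMod (p ^ n)
  have hrn : r ≤ n := le_trans hr2 (Nat.sub_le n 1)
  have hrltn : r < n := lt_of_le_of_lt hr2 (by omega)
  set I : Ideal R := Ideal.span {(p : R) ^ (n - r)} with hI
  -- zero-ness of d*b characterization
  have hzero : ∀ b : R, ((p : R) ^ r * (α : R)) * b = 0 ↔ b ∈ I := by
    intro b
    rw [hI, Ideal.mem_span_singleton, ← ann_iff p n r hp hrn b]
    constructor
    · intro h
      have : (b * (p : R) ^ r) * (α : R) = 0 := by simpa [mul_comm, mul_assoc, mul_left_comm] using h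
      exact (Units.mul_left_eq_zero α).mp this
    · intro h
      have : ((p : R) ^ r * (α : R)) * b = (b * (p : R) ^ r) * (α : R) := by simp only [mul_comm, mul_assoc, mul_left_comm]
      rw [this, h, zero_mul]
  -- Part 1
  have part1 : {s : R | s * ((p : R) ^ r * (α : R)) = 0} = (I : Set R) := by
    ext s
    simp only [Set.mem_setOf_eq, SetLike.mem_coe]
    rw [← hzero s, mul_comm]
  -- commuting criterion
  have hcomm : ∀ B : Tri R, (A * B = B * A) ↔ (B : Matrix (Fin 2) (Fin 2) R) 0 1 ∈ I := by
    intro B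
    rw [← hzero]
    rw [Subtype.ext_iff]
    simp only [Subring.coe_mul]
    conv_lhs => rw [hA, tri_eta B, Matrix.mul_fin_two, Matrix.mul_fin_two]
    constructor
    · intro h
      have := congrFun (congrFun h 0) 1
      simpa using this
    · intro h
      have h10 := tri_entry B
      apply Matrix.ext
      intro i j
      fin_cases i <;> fin_cases j <;> simp [h10] <;> first | exact h | ring | linear_combination h | linear_combination -h | simp [h]
  -- A is not central
  have hpr_ne : (p : R) ^ r * (α : R) ≠ 0 := by
    intro h
    have h1 : (p : R) ^ r = 0 := (Units.mul_left_eq_zero α).mp h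
    have h2 : ((p ^ r : ℕ) : R) = 0 := by push_cast; exact h1
    rw [ZMod.natCast_eq_zero_iff] at h2
    have := Nat.le_of_dvd (pow_pos hp.pos r) h2
    have := Nat.pow_lt_pow_right hp.one_lt hrltn
    omega
  have hAnc : A ∉ Set.center (Tri R) := by
    intro h
    obtain ⟨a, ha⟩ := (center_tri A).mp h
    rw [hA] at ha
    have h00 := congrFun (congrFun ha 0) 0
    have h11 := congrFun (congrFun ha 1) 1
    simp at h00 h11
    exact hpr_ne (h00.trans h11.symm)
  -- Part 2
  have part2 : {B : Tri R | A * B = B * A ∧ B ≠ A ∧ B ∉ Set.center (Tri R)} =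
      {B : Tri R | (∃ a b c : R, b ∈ I ∧
          (B : Matrix (Fin 2) (Fin 2) R) = !![a, b; 0, c]) ∧
        B ∉ Set.center (Tri R) ∧ B ≠ A} := by
    ext B
    simp only [Set.mem_setOf_eq]
    constructor
    · rintro ⟨h1, h2, h3⟩
      exact ⟨⟨_, _, _, (hcomm B).mp h1, tri_eta B⟩, h3, h2⟩
    · rintro ⟨⟨a, b, c, hb, hBeq⟩, h3, h2⟩
      refine ⟨(hcomm B).mpr ?_, h2, h3⟩
      rw [hBeq]; simpa using hb
  refine ⟨part1, part2, ?_⟩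
  -- Part 3: counting
  set U : Set (Tri R) := {B | (B : Matrix (Fin 2) (Fin 2) R) 0 1 ∈ I} with hU
  set C : Set (Tri R) := Set.center (Tri R) with hC
  have hSeq : {B : Tri R | A * B = B * A ∧ B ≠ A ∧ B ∉ Set.center (Tri R)} =
      U \ (C ∪ {A}) := by
    ext B
    simp only [Set.mem_setOf_eq, Set.mem_diff, Set.mem_union, Set.mem_singleton_iff, hU,
      Set.mem_setOf_eq, hC]
    rw [hcomm B]
    tauto
  rw [hSeq]
  have hfinU : U.Finite := Set.toFinite _
  have hfinC : (C ∪ {A}).Finite := Set.toFinite _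
  -- C ∪ {A} ⊆ U
  have hsub : C ∪ {A} ⊆ U := by
    rintro B (hB | hB)
    · obtain ⟨a, ha⟩ := (center_tri B).mp hB
      show (B : Matrix (Fin 2) (Fin 2) R) 0 1 ∈ I
      rw [ha]; simpa using I.zero_mem
    · rw [Set.mem_singleton_iff] at hB
      subst hB
      show (B : Matrix (Fin 2) (Fin 2) R) 0 1 ∈ I
      rw [hA]; simpa using I.zero_mem
  -- cardinal of U
  have hcardI : Nat.card I = p ^ r := card_span p n r hp hrn
  have hcardU : Nat.card U = p ^ n * (p ^ r * p ^ n) := by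
    have hmem : ∀ (a c : R) (b : I), (!![a, (b : R); 0, c] : Matrix (Fin 2) (Fin 2) R) ∈ Tri R := by
      intro a c b; show (!![a, (b:R); 0, c] : Matrix (Fin 2) (Fin 2) R) 1 0 = 0; simp
    let f : R × I × R → U := fun x =>
      ⟨⟨!![x.1, (x.2.1 : R); 0, x.2.2], hmem _ _ _⟩, by
        show (!![x.1, (x.2.1 : R); 0, x.2.2] : Matrix (Fin 2) (Fin 2) R) 0 1 ∈ I
        simpa using x.2.1.property⟩
    have hbij : Function.Bijective f := by
      constructor
      · rintro ⟨a, b, c⟩ ⟨a', b', c'⟩ hxy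
        have h := congrArg (fun z => ((z : Tri R) : Matrix (Fin 2) (Fin 2) R))
          (congrArg Subtype.val hxy)
        simp only [f] at h
        have h00 := congrFun (congrFun h 0) 0
        have h01 := congrFun (congrFun h 0) 1
        have h11 := congrFun (congrFun h 1) 1
        simp at h00 h01 h11
        exact Prod.ext h00 (Prod.ext (by exact_mod_cast h01) h11)
      · rintro ⟨B, hB⟩
        refine ⟨⟨(B : Matrix (Fin 2) (Fin 2) R) 0 0,
          ⟨(B : Matrix (Fin 2) (Fin 2) R) 0 1, hB⟩, (B : Matrix (Fin 2) (Fin 2) R) 1 1⟩, ?_⟩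
        apply Subtype.ext
        apply Subtype.ext
        exact (tri_eta B).symm
    rw [← Nat.card_eq_of_bijective f hbij, Nat.card_prod, Nat.card_prod, hcardI, Nat.card_zmod]
  -- cardinal of C ∪ {A}
  have hcardC : (C ∪ {A}).ncard = p ^ n + 1 := by
    rw [Set.union_singleton, Set.ncard_insert_of_notMem hAnc (Set.toFinite _)]
    have : C.ncard = p ^ n := by
      rw [← Nat.card_coe_set_eq, hC, card_center_tri, Nat.card_zmod]
    rw [this]
  have hUncard : U.ncard = p ^ n * (p ^ r * p ^ n) := by
    rw [← Nat.card_coe_set_eq]; exact hcardU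
  rw [Nat.card_coe_set_eq, Set.ncard_diff hsub hfinC, hUncard, hcardC]
  have hpow : p ^ n * (p ^ r * p ^ n) = p ^ (2 * n + r) := by
    rw [← pow_add, ← pow_add]
    congr 1
    omega
  rw [hpow]
  omega
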